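/- The 4×4 matrix ρ^{T_B} obtained by partial transpose (on the second qubit) of the thermal state ρ = e^{−βH}/Z has eigenvalues cosh(βα)/Z (with multiplicity 2) and (1 + e^{2βB} ± √(1 − 4e^{2βB} + e^{4βB} + 2e^{2βB}cosh(2βα)))/(2Z e^{βB}), where Z = 2(cosh(βα)+cosh(βB)). -/

import Mathlib

open Polynomial

noncomputable section

lemma key (a c d s l1 lp lm : ℂ) (h1 : c = l1) (h2 : lp + lm = a + d)
    (h3 : lp * lm = a * d - s * s) :
    (!![a,0,0,-s; 0,c,0,0; 0,0,c,0; -s,0,0,d] : Matrix (Fin 4) (Fin 4) ℂ).charpoly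
      = (X - C l1) ^ 2 * (X - C lp) * (X - C lm) := by
  subst h1
  have h2' : C lp + C lm = C a + C d := by rw [← map_add, ← map_add, h2]
  have h3' : C lp * C lm = C a * C d - C s * C s := by
    rw [← map_mul, ← map_mul, ← map_mul, ← map_sub, h3]
  have hcm : (!![a,0,0,-s; 0,c,0,0; 0,0,c,0; -s,0,0,d] : Matrix (Fin 4) (Fin 4) ℂ).charmatrix
      = !![X - C a, 0, 0, C s; 0, X - C c, 0, 0; 0, 0, X - C c, 0; C s, 0, 0, X - C d] := by
    ext i j
    fin_cases i <;> fin_cases j <;>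
      simp [Matrix.charmatrix_apply_eq, Matrix.charmatrix_apply_ne, Matrix.vecHead, Matrix.vecTail]
  rw [Matrix.charpoly, hcm]
  simp [Matrix.det_succ_row_zero, Fin.sum_univ_succ, Fin.castSucc, Fin.castAdd, Fin.castLE,
    Matrix.vecHead, Matrix.vecTail]
  simp only [show ((![0, 0, X - C c, 0] : Fin 4 → ℂ[X]) (Fin.succAbove 3 2)) = X - C c from rfl]
  linear_combination (X - C c)^2 * X * h2' - (X - C c)^2 * h3'


/-- Partial transpose (on the second qubit) of the two-qubit thermal state, in the
    standard basis {|00⟩,|01⟩,|10⟩,|11⟩}. -/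
def ρTB (β B α : ℝ) : Matrix (Fin 4) (Fin 4) ℂ :=
  ((2 * (Real.cosh (β * α) + Real.cosh (β * B)) : ℝ) : ℂ)⁻¹ •
    !![((Real.exp (-(β * B)) : ℝ) : ℂ), 0, 0, ((-(Real.sinh (β * α)) : ℝ) : ℂ);
       0, ((Real.cosh (β * α) : ℝ) : ℂ), 0, 0;
       0, 0, ((Real.cosh (β * α) : ℝ) : ℂ), 0;
       ((-(Real.sinh (β * α)) : ℝ) : ℂ), 0, 0, ((Real.exp (β * B) : ℝ) : ℂ)]

/-- The eigenvalues of ρ^{T_B} are cosh(βα)/Z (with multiplicity 2) and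
    (1 + e^{2βB} ± √(1 - 4e^{2βB} + e^{4βB} + 2e^{2βB}cosh(2βα)))/(2Z e^{βB}). -/
theorem eigenvalues_of_partial_transpose (β B α : ℝ) (hβ : 0 < β) :
    let Z : ℝ := 2 * (Real.cosh (β * α) + Real.cosh (β * B))
    let lam1 : ℝ := Real.cosh (β * α) / Z
    let R : ℝ := Real.sqrt (1 - 4 * Real.exp (2 * β * B) + Real.exp (4 * β * B)
      + 2 * Real.exp (2 * β * B) * Real.cosh (2 * β * α))
    let lamP : ℝ := (1 + Real.exp (2 * β * B) + R) / (2 * Z * Real.exp (β * B))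
    let lamM : ℝ := (1 + Real.exp (2 * β * B) - R) / (2 * Z * Real.exp (β * B))
    (ρTB β B α).charpoly
      = (X - C (lam1 : ℂ)) ^ 2 * (X - C (lamP : ℂ)) * (X - C (lamM : ℂ)) := by
  intro Z lam1 R lamP lamM
  have hc1 : (1:ℝ) ≤ Real.cosh (β * α) := Real.one_le_cosh _
  have hc2 : (1:ℝ) ≤ Real.cosh (β * B) := Real.one_le_cosh _
  have hZpos : 0 < Z := by simp only [Z]; nlinarith
  have hZ : Z ≠ 0 := ne_of_gt hZpos
  have hE : Real.exp (β * B) ≠ 0 := Real.exp_ne_zero _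
  have hEp : 0 < Real.exp (2 * β * B) := Real.exp_pos _
  have hexp4 : Real.exp (4 * β * B) = Real.exp (2 * β * B) * Real.exp (2 * β * B) := by
    rw [← Real.exp_add]; ring_nf
  have hexp2 : Real.exp (2 * β * B) = Real.exp (β * B) * Real.exp (β * B) := by
    rw [← Real.exp_add]; ring_nf
  have hexpn : Real.exp (-(β * B)) * Real.exp (β * B) = 1 := by
    rw [← Real.exp_add]; simp
  have hcosh2a : Real.cosh (2 * β * α) = 2 * Real.sinh (β * α) ^ 2 + 1 := by
    have : (2:ℝ) * β * α = 2 * (β * α) := by ring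
    rw [this, Real.cosh_two_mul, Real.cosh_sq]; ring
  have hrad : 0 ≤ 1 - 4 * Real.exp (2 * β * B) + Real.exp (4 * β * B)
      + 2 * Real.exp (2 * β * B) * Real.cosh (2 * β * α) := by
    nlinarith [sq_nonneg (1 - Real.exp (2 * β * B)), Real.one_le_cosh (2 * β * α), hEp]
  have hR2 : R * R = 1 - 4 * Real.exp (2 * β * B) + Real.exp (4 * β * B)
      + 2 * Real.exp (2 * β * B) * Real.cosh (2 * β * α) := Real.mul_self_sqrt hrad
  -- sum and product of lamP, lamM
  have hsum : lamP + lamM = Z⁻¹ * Real.exp (-(β * B)) + Z⁻¹ * Real.exp (β * B) := by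
    have hne : Real.exp (-(β * B)) = (Real.exp (β * B))⁻¹ := Real.exp_neg _
    simp only [lamP, lamM]
    rw [← add_div, hne]
    field_simp
    rw [hexp2]; ring
  have hprod : lamP * lamM = Z⁻¹ * Real.exp (-(β * B)) * (Z⁻¹ * Real.exp (β * B))
      - Z⁻¹ * -Real.sinh (β * α) * (Z⁻¹ * -Real.sinh (β * α)) := by
    have h1 : lamP * lamM = ((1 + Real.exp (2 * β * B)) * (1 + Real.exp (2 * β * B)) - R * R)
        / ((2 * Z * Real.exp (β * B)) * (2 * Z * Real.exp (β * B))) := by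
      simp only [lamP, lamM, div_mul_div_comm]; ring_nf
    rw [h1, hR2]
    have : Z⁻¹ * Real.exp (-(β * B)) * (Z⁻¹ * Real.exp (β * B))
        - Z⁻¹ * -Real.sinh (β * α) * (Z⁻¹ * -Real.sinh (β * α))
        = (1 - Real.sinh (β * α) ^ 2) / (Z * Z) := by
      field_simp
      nlinarith [hexpn]
    rw [this]
    rw [hcosh2a, hexp4, hexp2]
    field_simp
    ring
  -- rewrite ρTB as an explicit matrix
  have hmat : ρTB β B α = !![((Z:ℝ):ℂ)⁻¹ * ((Real.exp (-(β * B)) : ℝ) : ℂ), 0, 0,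
        -(((Z:ℝ):ℂ)⁻¹ * ((Real.sinh (β * α) : ℝ) : ℂ));
      0, ((Z:ℝ):ℂ)⁻¹ * ((Real.cosh (β * α) : ℝ) : ℂ), 0, 0;
      0, 0, ((Z:ℝ):ℂ)⁻¹ * ((Real.cosh (β * α) : ℝ) : ℂ), 0;
      -(((Z:ℝ):ℂ)⁻¹ * ((Real.sinh (β * α) : ℝ) : ℂ)), 0, 0,
        ((Z:ℝ):ℂ)⁻¹ * ((Real.exp (β * B) : ℝ) : ℂ)] := by
    ext i j
    fin_cases i <;> fin_cases j <;>
      simp [ρTB, Z, Matrix.vecHead, Matrix.vecTail, mul_comm] <;> ring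
  rw [hmat]
  apply key
  · simp only [lam1]
    push_cast [div_eq_inv_mul]
    ring
  · have := hsum
    have h : ((lamP + lamM : ℝ) : ℂ)
        = ((Z⁻¹ * Real.exp (-(β * B)) + Z⁻¹ * Real.exp (β * B) : ℝ) : ℂ) := by exact congrArg Complex.ofReal this
    push_cast at h
    push_cast
    linear_combination h
  · have h : ((lamP * lamM : ℝ) : ℂ)
        = ((Z⁻¹ * Real.exp (-(β * B)) * (Z⁻¹ * Real.exp (β * B))
          - Z⁻¹ * -Real.sinh (β * α) * (Z⁻¹ * -Real.sinh (β * α)) : ℝ) : ℂ) := by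
      exact congrArg Complex.ofReal hprod
    push_cast at h
    push_cast
    linear_combination h


end
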